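/- Let i ∈ {2, …, L} and d_{1i}(x) = gcd(m_1(x), m_i(x)) (taken monic). Let a(x), e_1(x), e_i(x) ∈ F[x] with deg(e_i − e_1) < deg(d_{1i}), and set ã_1(x) = [a]_{m_1}(x) + e_1(x) and ã_i(x) = [a]_{m_i}(x) + e_i(x). Then ã_i(x) − ã_1(x) − [ã_i − ã_1]_{d_{1i}}(x) = [a]_{m_i}(x) − [a]_{m_1}(x); equivalently, the computable estimate q̂_{i1}(x) = (ã_i(x) − ã_1(x) − [ã_i − ã_1]_{d_{1i}}(x))/d_{1i}(x) equals the true quotient q_{i1}(x) = ([a]_{m_i}(x) − [a]_{m_1}(x))/d_{1i}(x). -/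

import Mathlib

open Polynomial
open scoped Classical

/-- if the two residue errors `e_1, e_i` satisfy
`deg(e_i − e_1) < deg d_{1i}` with `d_{1i} = gcd(m_1, m_i)`, then the computable
quantity `ã_i − ã_1 − [ã_i − ã_1]_{d_{1i}}` equals `[a]_{m_i} − [a]_{m_1}`;
equivalently, the computable estimate `q̂_{i1}` equals the true quotient
`q_{i1}`. -/
theorem stmt17 {F : Type*} [Field F] {L : ℕ} (hL : 2 ≤ L)
    (m : Fin L → Polynomial F)
    (hmonic : ∀ i, (m i).Monic)
    (hdist : Function.Injective m)
    (hdeg : ∀ i, 0 < (m i).degree)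
    (i : Fin L) (hi : i ≠ ⟨0, by omega⟩)
    (a e1 ei : Polynomial F)
    (hsmall : (ei - e1).degree < (gcd (m ⟨0, by omega⟩) (m i)).degree)
    (r1 ri : Polynomial F)
    (hr1 : r1 = a %ₘ m ⟨0, by omega⟩ + e1)
    (hri : ri = a %ₘ m i + ei) :
    ri - r1 - (ri - r1) %ₘ gcd (m ⟨0, by omega⟩) (m i) =
      a %ₘ m i - a %ₘ m ⟨0, by omega⟩ ∧
    (ri - r1 - (ri - r1) %ₘ gcd (m ⟨0, by omega⟩) (m i)) /ₘ
        gcd (m ⟨0, by omega⟩) (m i) =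
      (a %ₘ m i - a %ₘ m ⟨0, by omega⟩) /ₘ gcd (m ⟨0, by omega⟩) (m i) := by
  set m1 := m ⟨0, by omega⟩ with hm1
  set d := gcd m1 (m i) with hd
  have hm1ne : m1 ≠ 0 := (hmonic _).ne_zero
  have hdne : d ≠ 0 := fun h => hm1ne ((gcd_eq_zero_iff _ _).mp h).1
  have hdmonic : d.Monic := by
    have := Polynomial.monic_normalize (R := F) hdne
    rwa [normalize_gcd] at this
  -- d divides a %ₘ m i - a %ₘ m1
  have hdvd : d ∣ a %ₘ m i - a %ₘ m1 := by
    have h1 : d ∣ a - a %ₘ m1 :=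
      dvd_trans (gcd_dvd_left m1 (m i)) ((modByMonic_eq_sub_mul_div a m1).symm ▸
        ⟨a /ₘ m1, by ring⟩)
    have h2 : d ∣ a - a %ₘ m i :=
      dvd_trans (gcd_dvd_right m1 (m i)) ((modByMonic_eq_sub_mul_div a (m i)).symm ▸
        ⟨a /ₘ m i, by ring⟩)
    have := dvd_sub h1 h2
    simpa using this
  have hrime : ri - r1 = (a %ₘ m i - a %ₘ m1) + (ei - e1) := by
    rw [hri, hr1]; ring
  have hmod : (ri - r1) %ₘ d = ei - e1 := by
    rw [hrime, add_modByMonic,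
      (modByMonic_eq_zero_iff_dvd hdmonic).mpr hdvd,
      (modByMonic_eq_self_iff hdmonic).mpr hsmall, zero_add]
  have h1 : ri - r1 - (ri - r1) %ₘ d = a %ₘ m i - a %ₘ m1 := by
    rw [hmod, hrime]; ring
  exact ⟨h1, by rw [h1]⟩
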